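/- arXiv:2502.18446 — 6 statements merged into one kernel-verified Lean document; each statement's English description precedes it below -/
import Mathlib

section
/- Hadamard's inequality for positive semidefinite matrices: for any n×n positive semidefinite complex matrix G, the product of the diagonal entries of G is greater than or equal to the determinant of G. -/
open Matrix ComplexOrder

-- trace = sum of eigenvalues
lemma trace_eq_sum_eigen {m : Type*} [Fintype m] [DecidableEq m] {A : Matrix m m ℂ}
    (hA : A.IsHermitian) : A.trace = ∑ i, (hA.eigenvalues i : ℂ) := by
  conv_lhs => rw [hA.spectral_theorem]
  rw [Unitary.conjStarAlgAut_apply, Matrix.trace_mul_cycle, mem_unitaryGroup_iff'.mp hA.eigenvectorUnitary.2, Matrix.one_mul,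
    Matrix.trace_diagonal]
  rfl

theorem hadamard_inequality {n : ℕ} (G : Matrix (Fin n) (Fin n) ℂ)
    (hG : G.PosSemidef) :
    (∏ i, G i i).im = 0 ∧ G.det.im = 0 ∧ G.det.re ≤ (∏ i, G i i).re := by
  have hdiag0 : ∀ i, (G i i).im = 0 := by
    intro i
    have := congrFun (congrFun hG.1 i) i
    simp only [conjTranspose_apply, Matrix.IsHermitian] at this
    have h2 : (starRingEnd ℂ) (G i i) = G i i := this
    exact Complex.conj_eq_iff_im.mp h2
  set a : Fin n → ℝ := fun i => (G i i).re with ha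
  have hGa : ∀ i, G i i = (a i : ℂ) := fun i => Complex.ext rfl (by simp [hdiag0 i])
  have hanonneg : ∀ i, 0 ≤ a i := by
    intro i
    have := hG.re_dotProduct_nonneg (Pi.single i 1)
    simpa [dotProduct, mulVec, Pi.single_apply, Finset.sum_ite_eq, ha] using this
  have hprodG : (∏ i, G i i) = ((∏ i, a i : ℝ) : ℂ) := by
    push_cast
    exact Finset.prod_congr rfl fun i _ => hGa i
  set μ : Fin n → ℝ := hG.1.eigenvalues with hμ
  have hμnonneg : ∀ i, 0 ≤ μ i := hG.eigenvalues_nonneg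
  have hdet : G.det = ((∏ i, μ i : ℝ) : ℂ) := by
    rw [hG.1.det_eq_prod_eigenvalues]; push_cast; rfl
  refine ⟨by rw [hprodG]; exact Complex.ofReal_im _, by rw [hdet]; exact Complex.ofReal_im _, ?_⟩
  rw [hprodG, hdet, Complex.ofReal_re, Complex.ofReal_re]
  -- now a real statement: ∏ μ ≤ ∏ a
  by_cases hpos : ∀ i, 0 < a i
  · rcases Nat.eq_zero_or_pos n with hn | hn
    · subst hn; simp
    set d : Fin n → ℂ := fun i => ((Real.sqrt (a i))⁻¹ : ℂ) with hd
    set D := diagonal d with hD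
    have hDh : Dᴴ = D := by
      have hsd : star d = d := by funext i; simp [hd]
      rw [hD, diagonal_conjTranspose, hsd]
    have hH : (D * G * D).PosSemidef := by
      have := hG.mul_mul_conjTranspose_same D
      rwa [hDh] at this
    set ν : Fin n → ℝ := hH.1.eigenvalues with hν
    have hνnonneg : ∀ i, 0 ≤ ν i := hH.eigenvalues_nonneg
    have hdiag1 : ∀ i, (D * G * D) i i = 1 := by
      intro i
      have h1 : ((Real.sqrt (a i))⁻¹ : ℝ) * a i * (Real.sqrt (a i))⁻¹ = 1 := by
        have hs : Real.sqrt (a i) * Real.sqrt (a i) = a i := Real.mul_self_sqrt (hanonneg i)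
        have hs0 : Real.sqrt (a i) ≠ 0 := ne_of_gt (Real.sqrt_pos.mpr (hpos i))
        field_simp
        rw [sq, hs]
      have : (D * G * D) i i = d i * G i i * d i := by
        rw [hD, Matrix.mul_assoc, diagonal_mul, mul_diagonal]
        ring
      rw [this, hGa i, hd]
      have h2 : ((Real.sqrt (a i) : ℝ) : ℂ)⁻¹ * ((a i : ℝ) : ℂ) * ((Real.sqrt (a i) : ℝ) : ℂ)⁻¹
          = (((Real.sqrt (a i))⁻¹ * a i * (Real.sqrt (a i))⁻¹ : ℝ) : ℂ) := by push_cast; ring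
      rw [h2, h1]
      exact Complex.ofReal_one
    have htr : (D * G * D).trace = (n : ℂ) := by
      rw [Matrix.trace]
      simp only [Matrix.diag_apply]
      rw [Finset.sum_congr rfl fun i _ => hdiag1 i]
      simp
    have hsum : ∑ i, ν i = (n : ℝ) := by
      have h := (trace_eq_sum_eigen hH.1).symm.trans htr
      have h2 : ((∑ i, ν i : ℝ) : ℂ) = ((n : ℝ) : ℂ) := by push_cast; simpa using h
      exact_mod_cast h2
    have hdetD : D.det = ((∏ i, (Real.sqrt (a i))⁻¹ : ℝ) : ℂ) := by
      rw [hD, det_diagonal]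
      push_cast
      rfl
    have hprodν : ∏ i, ν i = (∏ i, a i)⁻¹ * ∏ i, μ i := by
      have h := hH.1.det_eq_prod_eigenvalues
      rw [det_mul, det_mul, hdetD, hdet, ← hν] at h
      have h3 : (∏ i, ν i : ℝ) =
          (∏ i, (Real.sqrt (a i))⁻¹) * (∏ i, μ i) * (∏ i, (Real.sqrt (a i))⁻¹) := by
        refine Complex.ofReal_inj.mp ?_
        push_cast at h ⊢
        exact h.symm
      have hPP : (∏ i, (Real.sqrt (a i))⁻¹) ^ 2 = (∏ i, a i)⁻¹ := by
        rw [← Finset.prod_pow, ← Finset.prod_inv_distrib]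
        exact Finset.prod_congr rfl fun i _ => by
          rw [inv_pow, sq, Real.mul_self_sqrt (hanonneg i)]
      calc ∏ i, ν i
          = (∏ i, (Real.sqrt (a i))⁻¹) ^ 2 * ∏ i, μ i := by rw [h3]; ring
        _ = (∏ i, a i)⁻¹ * ∏ i, μ i := by rw [hPP]
    have hνle1 : ∏ i, ν i ≤ 1 := by
      have hw : ∀ i ∈ (Finset.univ : Finset (Fin n)), (0:ℝ) ≤ (n : ℝ)⁻¹ := fun _ _ => by positivity
      have hw' : ∑ _i : Fin n, (n : ℝ)⁻¹ = 1 := by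
        rw [Finset.sum_const, Finset.card_univ, Fintype.card_fin, nsmul_eq_mul]
        field_simp
      have hgm := Real.geom_mean_le_arith_mean_weighted Finset.univ
        (fun _ => (n : ℝ)⁻¹) ν hw hw' (fun i _ => hνnonneg i)
      have hlhs : (∏ i, ν i ^ ((n : ℝ)⁻¹)) = (∏ i, ν i) ^ ((n : ℝ)⁻¹) := by
        rw [← Real.finset_prod_rpow _ _ (fun i _ => hνnonneg i)]
      have hrhs : (∑ i, (n : ℝ)⁻¹ * ν i) = 1 := by
        rw [← Finset.mul_sum, hsum]
        field_simp
      rw [hlhs, hrhs] at hgm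
      by_contra h1
      push_neg at h1
      have := Real.one_lt_rpow_iff_of_pos (lt_trans one_pos h1) (y := (n : ℝ)⁻¹)
      have h2 : 1 < (∏ i, ν i) ^ ((n : ℝ)⁻¹) := this.mpr (Or.inl ⟨h1, by positivity⟩)
      linarith
    have hpa : 0 < ∏ i, a i := Finset.prod_pos fun i _ => hpos i
    calc ∏ i, μ i = (∏ i, ν i) * ∏ i, a i := by
          rw [hprodν]; field_simp
      _ ≤ 1 * ∏ i, a i := by
          apply mul_le_mul_of_nonneg_right hνle1 (le_of_lt hpa)
      _ = ∏ i, a i := one_mul _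
  · push_neg at hpos
    obtain ⟨j, hj⟩ := hpos
    have haj : a j = 0 := le_antisymm hj (hanonneg j)
    have hGjj : G j j = 0 := by rw [hGa j, haj]; simp
    have hcol : G *ᵥ Pi.single j 1 = 0 := by
      rw [← hG.dotProduct_mulVec_zero_iff]
      simp [dotProduct, mulVec, Pi.single_apply, hGjj]
    have hdet0 : G.det = 0 := by
      apply det_eq_zero_of_column_eq_zero j
      intro i
      have := congrFun hcol i
      simpa [mulVec, dotProduct, Pi.single_apply] using this
    have hμ0 : ∏ i, μ i = 0 := by
      have : ((∏ i, μ i : ℝ) : ℂ) = 0 := by rw [← hdet, hdet0]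
      exact_mod_cast this
    rw [hμ0]
    exact Finset.prod_nonneg fun i _ => hanonneg i
end

section
/- For any 3×3 positive semidefinite complex matrix G, the immanant associated with the standard representation, imm_{(2,1)}(G) = 2·G_{11}G_{22}G_{33} − (G_{12}G_{23}G_{31} + G_{13}G_{21}G_{32}), is a nonnegative real number. -/
open Matrix ComplexOrder

theorem imm21_nonneg (G : Matrix (Fin 3) (Fin 3) ℂ) (hG : G.PosSemidef) :
    (2 * (G 0 0 * G 1 1 * G 2 2) - (G 0 1 * G 1 2 * G 2 0 + G 0 2 * G 1 0 * G 2 1)).im = 0 ∧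
      0 ≤ (2 * (G 0 0 * G 1 1 * G 2 2) - (G 0 1 * G 1 2 * G 2 0 + G 0 2 * G 1 0 * G 2 1)).re := by
  obtain ⟨B, hB⟩ : ∃ B : Matrix (Fin 3) (Fin 3) ℂ, G = Bᴴ * B := by
    open scoped MatrixOrder in exact CStarAlgebra.nonneg_iff_eq_star_mul_self.mp hG.nonneg
  set f : Fin 3 → EuclideanSpace ℂ (Fin 3) := fun i => WithLp.toLp 2 (fun k => B k i) with hf
  have hGij : ∀ i j, G i j = @inner ℂ _ _ (f i) (f j) := by
    intro i j
    simp [hB, Matrix.mul_apply, Matrix.conjTranspose_apply, PiLp.inner_apply,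
      RCLike.inner_apply, hf, mul_comm]
  have hdiag : ∀ i, G i i = (‖f i‖ : ℂ) ^ 2 := fun i => by
    rw [hGij]; exact inner_self_eq_norm_sq_to_K _
  have hoff : ∀ i j, ‖G i j‖ ≤ ‖f i‖ * ‖f j‖ := fun i j => by
    rw [hGij]; exact norm_inner_le_norm _ _
  have hconj : ∀ i j, G j i = starRingEnd ℂ (G i j) := fun i j => by
    rw [hGij, hGij]; exact (inner_conj_symm _ _).symm
  set w : ℂ := G 0 1 * G 1 2 * G 2 0 with hw
  have h2 : G 0 2 * G 1 0 * G 2 1 = starRingEnd ℂ w := by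
    simp only [hw, _root_.map_mul]; rw [← hconj 0 1, ← hconj 1 2, ← hconj 2 0]; ring
  have key : (2 * (G 0 0 * G 1 1 * G 2 2) - (G 0 1 * G 1 2 * G 2 0 + G 0 2 * G 1 0 * G 2 1))
      = ((2 * (‖f 0‖ ^ 2 * ‖f 1‖ ^ 2 * ‖f 2‖ ^ 2) - 2 * w.re : ℝ) : ℂ) := by
    rw [hdiag 0, hdiag 1, hdiag 2, ← hw, h2, Complex.add_conj]
    push_cast
    ring
  rw [key]
  have hre : w.re ≤ ‖f 0‖ ^ 2 * ‖f 1‖ ^ 2 * ‖f 2‖ ^ 2 := by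
    have h1 : w.re ≤ ‖w‖ := Complex.re_le_norm w
    have h2 : ‖w‖ ≤ (‖f 0‖ * ‖f 1‖) * (‖f 1‖ * ‖f 2‖) * (‖f 2‖ * ‖f 0‖) := by
      rw [hw, norm_mul, norm_mul]
      gcongr <;> [exact hoff 0 1; exact hoff 1 2; exact hoff 2 0]
    nlinarith [norm_nonneg (f 0), norm_nonneg (f 1), norm_nonneg (f 2)]
  refine ⟨Complex.ofReal_im _, ?_⟩
  rw [Complex.ofReal_re]
  nlinarith [hre]
end

section
/- For 3×3 positive semidefinite complex matrices G, half the standard immanant dominates the determinant: imm_{(2,1)}(G)/2 − det(G) ≥ 0. -/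
set_option maxHeartbeats 1000000
open Matrix ComplexOrder Complex

private lemma aux_minor {a b n : ℝ} (ha : 0 ≤ a) (hb : 0 ≤ b) (hn : 0 ≤ n)
    (h : ∀ t : ℝ, 0 ≤ a * (t * t) + (-(2 * n)) * t + b * n) : n ≤ a * b := by
  have hd := discrim_le_zero h
  rw [discrim] at hd
  rcases hn.eq_or_lt with h0 | h0
  · rw [← h0]; exact mul_nonneg ha hb
  · nlinarith

private lemma aux_key {X Y Z R : ℝ} (hX : 0 ≤ X) (hY : 0 ≤ Y) (hZ : 0 ≤ Z)
    (h1 : R ^ 2 ≤ X * Y) (h2 : R ^ 2 ≤ Y * Z) (h3 : R ^ 2 ≤ X * Z) :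
    3 * R ≤ X + Y + Z := by
  rcases le_or_gt R 0 with hR | hR
  · linarith
  · have e1 : 2 * R ≤ X + Y := by nlinarith [sq_nonneg (X - Y)]
    have e2 : 2 * R ≤ Y + Z := by nlinarith [sq_nonneg (Y - Z)]
    have e3 : 2 * R ≤ X + Z := by nlinarith [sq_nonneg (X - Z)]
    linarith

theorem imm21_half_ge_det (G : Matrix (Fin 3) (Fin 3) ℂ) (hG : G.PosSemidef) :
    ((2 * (G 0 0 * G 1 1 * G 2 2) - G 0 1 * G 1 2 * G 2 0 - G 0 2 * G 1 0 * G 2 1) / 2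
        - G.det).im = 0 ∧
      0 ≤ ((2 * (G 0 0 * G 1 1 * G 2 2) - G 0 1 * G 1 2 * G 2 0 - G 0 2 * G 1 0 * G 2 1) / 2
        - G.det).re := by
  obtain ⟨hH, hQ⟩ := And.intro hG.1 hG.dotProduct_mulVec_nonneg
  have e10 : G 1 0 = (starRingEnd ℂ) (G 0 1) := (hH.apply 1 0).symm
  have e20 : G 2 0 = (starRingEnd ℂ) (G 0 2) := (hH.apply 2 0).symm
  have e21 : G 2 1 = (starRingEnd ℂ) (G 1 2) := (hH.apply 2 1).symm
  have hd0 : (G 0 0).im = 0 := Complex.conj_eq_iff_im.mp (hH.apply 0 0)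
  have hd1 : (G 1 1).im = 0 := Complex.conj_eq_iff_im.mp (hH.apply 1 1)
  have hd2 : (G 2 2).im = 0 := Complex.conj_eq_iff_im.mp (hH.apply 2 2)
  have ha : 0 ≤ (G 0 0).re := by
    have h := hQ ![1, 0, 0]
    rw [Complex.nonneg_iff] at h
    simpa [dotProduct, mulVec, Fin.sum_univ_three] using h.1
  have hb : 0 ≤ (G 1 1).re := by
    have h := hQ ![0, 1, 0]
    rw [Complex.nonneg_iff] at h
    simpa [dotProduct, mulVec, Fin.sum_univ_three] using h.1
  have hc : 0 ≤ (G 2 2).re := by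
    have h := hQ ![0, 0, 1]
    rw [Complex.nonneg_iff] at h
    simpa [dotProduct, mulVec, Fin.sum_univ_three] using h.1
  have m01 : (G 0 1).re ^ 2 + (G 0 1).im ^ 2 ≤ (G 0 0).re * (G 1 1).re := by
    apply aux_minor ha hb (by positivity)
    intro t
    have h := hQ ![(t : ℂ), -(starRingEnd ℂ) (G 0 1), 0]
    rw [Complex.nonneg_iff] at h
    have hre := h.1
    simp [e10, dotProduct, mulVec, Fin.sum_univ_three, Complex.add_re, Complex.mul_re, hd0, hd1] at hre
    nlinarith [hre]
  have m02 : (G 0 2).re ^ 2 + (G 0 2).im ^ 2 ≤ (G 0 0).re * (G 2 2).re := by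
    apply aux_minor ha hc (by positivity)
    intro t
    have h := hQ ![(t : ℂ), 0, -(starRingEnd ℂ) (G 0 2)]
    rw [Complex.nonneg_iff] at h
    have hre := h.1
    simp [e20, dotProduct, mulVec, Fin.sum_univ_three, Complex.add_re, Complex.mul_re, hd0, hd2] at hre
    nlinarith [hre]
  have m12 : (G 1 2).re ^ 2 + (G 1 2).im ^ 2 ≤ (G 1 1).re * (G 2 2).re := by
    apply aux_minor hb hc (by positivity)
    intro t
    have h := hQ ![0, (t : ℂ), -(starRingEnd ℂ) (G 1 2)]
    rw [Complex.nonneg_iff] at h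
    have hre := h.1
    simp [e21, dotProduct, mulVec, Fin.sum_univ_three, Complex.add_re, Complex.mul_re, hd1, hd2] at hre
    nlinarith [hre]
  set a := (G 0 0).re
  set b := (G 1 1).re
  set c := (G 2 2).re
  set p1 := (G 0 1).re; set p2 := (G 0 1).im
  set q1 := (G 1 2).re; set q2 := (G 1 2).im
  set r1 := (G 0 2).re; set r2 := (G 0 2).im
  have key : 3 * ((p1 * q1 - p2 * q2) * r1 + (p1 * q2 + p2 * q1) * r2) ≤
      a * (q1 ^ 2 + q2 ^ 2) + b * (r1 ^ 2 + r2 ^ 2) + c * (p1 ^ 2 + p2 ^ 2) := by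
    apply aux_key (by positivity) (by positivity) (by positivity)
    · nlinarith [sq_nonneg ((p1 * q1 - p2 * q2) * r2 - (p1 * q2 + p2 * q1) * r1),
        mul_le_mul_of_nonneg_right m01 (mul_nonneg (by positivity : (0:ℝ) ≤ q1 ^ 2 + q2 ^ 2) (by positivity : (0:ℝ) ≤ r1 ^ 2 + r2 ^ 2))]
    · nlinarith [sq_nonneg ((p1 * q1 - p2 * q2) * r2 - (p1 * q2 + p2 * q1) * r1),
        mul_le_mul_of_nonneg_right m12 (mul_nonneg (by positivity : (0:ℝ) ≤ r1 ^ 2 + r2 ^ 2) (by positivity : (0:ℝ) ≤ p1 ^ 2 + p2 ^ 2))]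
    · nlinarith [sq_nonneg ((p1 * q1 - p2 * q2) * r2 - (p1 * q2 + p2 * q1) * r1),
        mul_le_mul_of_nonneg_right m02 (mul_nonneg (by positivity : (0:ℝ) ≤ q1 ^ 2 + q2 ^ 2) (by positivity : (0:ℝ) ≤ p1 ^ 2 + p2 ^ 2))]
  rw [Matrix.det_fin_three]
  constructor
  · simp [e10, e20, e21, Complex.div_im, Complex.sub_im, Complex.add_im, Complex.mul_im,
      Complex.mul_re, Complex.sub_re, Complex.add_re, Complex.normSq_apply, hd0, hd1, hd2]
    ring
  · simp [e10, e20, e21, Complex.div_re, Complex.sub_im, Complex.add_im, Complex.mul_im,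
      Complex.mul_re, Complex.sub_re, Complex.add_re, Complex.normSq_apply, hd0, hd1, hd2]
    ring_nf
    ring_nf at key
    linarith [key]
end

section
/- For any two positive semidefinite d×d complex matrices Y and Z, the map Ψ(Y,Z) = I·tr(Y)·tr(Z) + YZ + ZY − Y·tr(Z) − Z·tr(Y) − I·tr(YZ) yields a positive semidefinite matrix. -/
open Matrix ComplexOrder

lemma psd_det_nonneg {n : Type*} [Fintype n] [DecidableEq n] {M : Matrix n n ℂ}
    (hM : M.PosSemidef) : 0 ≤ M.det := by
  rw [hM.1.det_eq_prod_eigenvalues]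
  norm_cast
  exact RCLike.ofReal_nonneg.mpr (Finset.prod_nonneg fun i _ => hM.eigenvalues_nonneg i)

lemma gram_nonneg {d : ℕ} (x a b : Fin d → ℂ) :
    0 ≤ (star x ⬝ᵥ x) * (star a ⬝ᵥ a) * (star b ⬝ᵥ b)
      + (star x ⬝ᵥ a) * (star a ⬝ᵥ b) * (star b ⬝ᵥ x)
      + (star x ⬝ᵥ b) * (star b ⬝ᵥ a) * (star a ⬝ᵥ x)
      - (star a ⬝ᵥ a) * (star x ⬝ᵥ b) * (star b ⬝ᵥ x)
      - (star b ⬝ᵥ b) * (star x ⬝ᵥ a) * (star a ⬝ᵥ x)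
      - (star x ⬝ᵥ x) * (star a ⬝ᵥ b) * (star b ⬝ᵥ a) := by
  set B : Matrix (Fin d) (Fin 3) ℂ := Matrix.of fun k j => ![x, a, b] j k with hB
  have h := psd_det_nonneg (posSemidef_conjTranspose_mul_self B)
  rw [det_fin_three] at h
  have e : ∀ (j l : Fin 3), (Bᴴ * B) j l = star (![x, a, b] j) ⬝ᵥ (![x, a, b] l) := by
    intro j l
    simp [Matrix.mul_apply, dotProduct, hB, Matrix.conjTranspose_apply, Pi.star_apply]
  simp only [e] at h
  convert h using 1
  simp [Matrix.cons_val_zero, Matrix.cons_val_one]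
  ring

open Finset

variable {d : ℕ}

lemma sdot (x v : Fin d → ℂ) : star x ⬝ᵥ star v = star (v ⬝ᵥ x) := by
  simp [dotProduct, Finset.sum_comm, mul_comm]

lemma hmv (M : Matrix (Fin d) (Fin d) ℂ) (v : Fin d → ℂ) (i : Fin d) :
    (M *ᵥ v) i = M i ⬝ᵥ v := rfl

lemma massoc (A B : Matrix (Fin d) (Fin d) ℂ) :
    Aᴴ * A * (Bᴴ * B) = Aᴴ * ((A * Bᴴ) * B) := by
  rw [mul_assoc, ← mul_assoc A]

lemma tr_eq (A : Matrix (Fin d) (Fin d) ℂ) :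
    (Aᴴ * A).trace = ∑ i, star (star (A i)) ⬝ᵥ star (A i) := by
  rw [Matrix.trace_mul_comm]
  simp only [Matrix.trace, Matrix.diag, Matrix.mul_apply, conjTranspose_apply,
    dotProduct, Pi.star_apply, star_star]

lemma quad_eq (A : Matrix (Fin d) (Fin d) ℂ) (x : Fin d → ℂ) :
    star x ⬝ᵥ (Aᴴ * A) *ᵥ x
      = ∑ i, (star x ⬝ᵥ star (A i)) * (star (star (A i)) ⬝ᵥ x) := by
  rw [← Matrix.mulVec_mulVec, Matrix.dotProduct_mulVec, ← Matrix.star_mulVec]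
  simp only [sdot, star_star]
  simp only [dotProduct, Pi.star_apply, hmv]

lemma quad2_eq (A B : Matrix (Fin d) (Fin d) ℂ) (x : Fin d → ℂ) :
    star x ⬝ᵥ ((Aᴴ * A) * (Bᴴ * B)) *ᵥ x
      = ∑ i, ∑ j, (star x ⬝ᵥ star (A i)) * (star (star (A i)) ⬝ᵥ star (B j))
          * (star (star (B j)) ⬝ᵥ x) := by
  rw [massoc, ← Matrix.mulVec_mulVec, Matrix.dotProduct_mulVec, ← Matrix.star_mulVec,
    ← Matrix.mulVec_mulVec]
  simp only [sdot, star_star]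
  simp only [dotProduct, Pi.star_apply, hmv, Matrix.mul_apply,
    conjTranspose_apply, Finset.mul_sum, Finset.sum_mul]
  refine Finset.sum_congr rfl fun i _ => Finset.sum_congr rfl fun j _ =>
    Finset.sum_congr rfl fun k _ => Finset.sum_congr rfl fun l _ => ?_
  ring

lemma tr2_eq (A B : Matrix (Fin d) (Fin d) ℂ) :
    ((Aᴴ * A) * (Bᴴ * B)).trace
      = ∑ i, ∑ j, (star (star (A i)) ⬝ᵥ star (B j)) * (star (star (B j)) ⬝ᵥ star (A i)) := by
  rw [massoc, Matrix.trace_mul_comm, mul_assoc]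
  simp only [sdot, star_star]
  simp only [Matrix.trace, Matrix.diag, Matrix.mul_apply,
    conjTranspose_apply, dotProduct, Pi.star_apply, Finset.mul_sum, Finset.sum_mul]

theorem cayley_hamiltonian_map_positive {d : ℕ} (Y Z : Matrix (Fin d) (Fin d) ℂ)
    (hY : Y.PosSemidef) (hZ : Z.PosSemidef) :
    ((Y.trace * Z.trace) • (1 : Matrix (Fin d) (Fin d) ℂ) + Y * Z + Z * Y
      - Z.trace • Y - Y.trace • Z
      - (Y * Z).trace • (1 : Matrix (Fin d) (Fin d) ℂ)).PosSemidef := by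
  obtain ⟨A, hA⟩ : ∃ A : Matrix (Fin d) (Fin d) ℂ, Y = Aᴴ * A := by
    open scoped MatrixOrder in exact CStarAlgebra.nonneg_iff_eq_star_mul_self.mp hY.nonneg
  obtain ⟨B, hB⟩ : ∃ B : Matrix (Fin d) (Fin d) ℂ, Z = Bᴴ * B := by
    open scoped MatrixOrder in exact CStarAlgebra.nonneg_iff_eq_star_mul_self.mp hZ.nonneg
  rw [posSemidef_iff_dotProduct_mulVec]
  constructor
  · -- Hermitian
    have hty : star Y.trace = Y.trace := by
      rw [← Matrix.trace_conjTranspose, hY.1]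
    have htz : star Z.trace = Z.trace := by
      rw [← Matrix.trace_conjTranspose, hZ.1]
    have htyz : star (Y * Z).trace = (Y * Z).trace := by
      rw [← Matrix.trace_conjTranspose, conjTranspose_mul, hY.1, hZ.1,
        Matrix.trace_mul_comm]
    have h1 : Yᴴ = Y := hY.1
    have h2 : Zᴴ = Z := hZ.1
    unfold Matrix.IsHermitian
    simp only [conjTranspose_add, conjTranspose_sub, conjTranspose_smul,
      conjTranspose_mul, conjTranspose_one, h1, h2, hty, htz, htyz, star_mul',
      mul_comm Z.trace Y.trace]
    abel
  · intro x
    simp only [Matrix.add_mulVec, Matrix.sub_mulVec, Matrix.smul_mulVec,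
      Matrix.one_mulVec, dotProduct_add, dotProduct_sub, dotProduct_smul,
      smul_eq_mul]
    set n := star x ⬝ᵥ x with hn
    have e1 : Y.trace * Z.trace * n
        = ∑ i, ∑ j, (star (star (A i)) ⬝ᵥ star (A i))
            * (star (star (B j)) ⬝ᵥ star (B j)) * n := by
      rw [hA, hB, tr_eq, tr_eq, Finset.sum_mul_sum]
      simp only [Finset.sum_mul]
    have e2 : star x ⬝ᵥ (Y * Z) *ᵥ x
        = ∑ i, ∑ j, (star x ⬝ᵥ star (A i)) * (star (star (A i)) ⬝ᵥ star (B j))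
            * (star (star (B j)) ⬝ᵥ x) := by
      rw [hA, hB, quad2_eq]
    have e3 : star x ⬝ᵥ (Z * Y) *ᵥ x
        = ∑ i, ∑ j, (star x ⬝ᵥ star (B j)) * (star (star (B j)) ⬝ᵥ star (A i))
            * (star (star (A i)) ⬝ᵥ x) := by
      rw [hA, hB, quad2_eq, Finset.sum_comm]
    have e4 : Z.trace * (star x ⬝ᵥ Y *ᵥ x)
        = ∑ i, ∑ j, (star (star (B j)) ⬝ᵥ star (B j))
            * ((star x ⬝ᵥ star (A i)) * (star (star (A i)) ⬝ᵥ x)) := by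
      rw [hA, hB, tr_eq, quad_eq, Finset.sum_mul_sum, Finset.sum_comm]
    have e5 : Y.trace * (star x ⬝ᵥ Z *ᵥ x)
        = ∑ i, ∑ j, (star (star (A i)) ⬝ᵥ star (A i))
            * ((star x ⬝ᵥ star (B j)) * (star (star (B j)) ⬝ᵥ x)) := by
      rw [hA, hB, tr_eq, quad_eq, Finset.sum_mul_sum]
    have e6 : (Y * Z).trace * n
        = ∑ i, ∑ j, (star (star (A i)) ⬝ᵥ star (B j))
            * (star (star (B j)) ⬝ᵥ star (A i)) * n := by
      rw [hA, hB, tr2_eq]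
      simp only [Finset.sum_mul]
    rw [e1, e2, e3, e4, e5, e6]
    simp only [← Finset.sum_sub_distrib, ← Finset.sum_add_distrib]
    refine Finset.sum_nonneg fun i _ => Finset.sum_nonneg fun j _ => ?_
    have := gram_nonneg x (star (A i)) (star (B j))
    convert this using 1
    ring
end

section
/- For any positive semidefinite matrices X, Y, Z of size d×d, the matrix X·tr(YX)·tr(ZX) + XYXZX + XZXYX − XYX·tr(ZX) − X·tr(YXZX) − XZX·tr(YX) is positive semidefinite. -/
open Matrix ComplexOrder

namespace FilteredCH

variable {d : ℕ}

/-- The degree-3 Cayley–Hamiltonian expression. -/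
noncomputable def F (A B : Matrix (Fin d) (Fin d) ℂ) : Matrix (Fin d) (Fin d) ℂ :=
  (A.trace * B.trace) • 1 + A * B + B * A - (A * B).trace • 1
    - A.trace • B - B.trace • A

lemma det_nonneg {n : Type*} [Fintype n] [DecidableEq n] {M : Matrix n n ℂ}
    (hM : M.PosSemidef) : 0 ≤ M.det := by
  rw [hM.isHermitian.det_eq_prod_eigenvalues]
  apply Finset.prod_nonneg
  intro i _
  simpa using hM.eigenvalues_nonneg i

lemma vecMulVec_mulVec (u v x : Fin d → ℂ) :
    vecMulVec u v *ᵥ x = (v ⬝ᵥ x) • u := by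
  ext i
  simp only [mulVec, vecMulVec_apply, dotProduct, Pi.smul_apply, smul_eq_mul,
    Finset.sum_mul]
  exact Finset.sum_congr rfl fun j _ => by ring

lemma vecMulVec_mul_vecMulVec (u a w b : Fin d → ℂ) :
    vecMulVec u a * vecMulVec w b = (a ⬝ᵥ w) • vecMulVec u b := by
  ext i j
  simp only [Matrix.mul_apply, vecMulVec_apply, Matrix.smul_apply, smul_eq_mul,
    dotProduct, Finset.sum_mul]
  exact Finset.sum_congr rfl fun k _ => by ring

lemma trace_vecMulVec (u b : Fin d → ℂ) :
    (vecMulVec u b).trace = b ⬝ᵥ u := by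
  simp only [Matrix.trace, Matrix.diag_apply, vecMulVec_apply, dotProduct]
  exact Finset.sum_congr rfl fun k _ => mul_comm _ _

lemma vecMulVec_isHermitian (u : Fin d → ℂ) :
    (vecMulVec u (star u)).IsHermitian := by
  ext i j
  simp only [conjTranspose_apply, vecMulVec_apply, Pi.star_apply, star_mul',
    star_star]
  ring

/-- The core positivity: the filtered rank-one version of `F` is PSD, because its
quadratic form is a 3×3 Gram determinant. -/
lemma rankOne_F_posSemidef (u w : Fin d → ℂ) :
    (F (vecMulVec u (star u)) (vecMulVec w (star w))).PosSemidef := by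
  rw [posSemidef_iff_dotProduct_mulVec]
  constructor
  · -- Hermitian
    have hu := vecMulVec_isHermitian u
    have hw := vecMulVec_isHermitian w
    have htu : star (vecMulVec u (star u)).trace = (vecMulVec u (star u)).trace := by
      rw [← trace_conjTranspose, hu.eq]
    have htw : star (vecMulVec w (star w)).trace = (vecMulVec w (star w)).trace := by
      rw [← trace_conjTranspose, hw.eq]
    have htuw : star (vecMulVec u (star u) * vecMulVec w (star w)).trace
        = (vecMulVec u (star u) * vecMulVec w (star w)).trace := by
      rw [← trace_conjTranspose, conjTranspose_mul, hu.eq, hw.eq, trace_mul_comm]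
    unfold Matrix.IsHermitian
    simp only [F, conjTranspose_sub, conjTranspose_add, conjTranspose_smul,
      conjTranspose_mul, conjTranspose_one, hu.eq, hw.eq, star_mul', htu, htw, htuw]
    abel
  · intro p
    -- The Gram matrix of the rows p, u, w
    set G : Matrix (Fin 3) (Fin 3) ℂ :=
      (Matrix.of ![p, u, w]) * (Matrix.of ![p, u, w])ᴴ with hGdef
    have hGpsd : G.PosSemidef := posSemidef_self_mul_conjTranspose _
    have hGdet : 0 ≤ G.det := det_nonneg hGpsd
    have hGapp : ∀ i j, G i j = star (![p, u, w] j) ⬝ᵥ (![p, u, w] i) := by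
      intro i j
      simp only [hGdef, Matrix.mul_apply, conjTranspose_apply, Matrix.of_apply,
        dotProduct, Pi.star_apply]
      exact Finset.sum_congr rfl fun k _ => mul_comm _ _
    have key : star p ⬝ᵥ (F (vecMulVec u (star u)) (vecMulVec w (star w))) *ᵥ p
        = G.det := by
      rw [det_fin_three]
      simp only [hGapp, Matrix.cons_val_zero, Matrix.cons_val_one, Matrix.head_cons,
        Matrix.cons_val_two, Matrix.tail_cons]
      simp only [F, vecMulVec_mul_vecMulVec, trace_vecMulVec, trace_smul,
        smul_eq_mul, sub_mulVec, add_mulVec, smul_mulVec, one_mulVec,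
        ← mulVec_mulVec, vecMulVec_mulVec, mulVec_smul,
        dotProduct_sub, dotProduct_add, dotProduct_smul]
      ring
    rw [key]
    exact hGdet

lemma F_sum_left {ι : Type*} (s : Finset ι) (P : ι → Matrix (Fin d) (Fin d) ℂ)
    (B : Matrix (Fin d) (Fin d) ℂ) :
    F (∑ k ∈ s, P k) B = ∑ k ∈ s, F (P k) B := by
  simp only [F, Matrix.sum_mul, Matrix.mul_sum, trace_sum, Finset.sum_mul,
    Finset.sum_smul, Finset.smul_sum, ← Finset.sum_add_distrib, ← Finset.sum_sub_distrib]

lemma F_sum_right {ι : Type*} (s : Finset ι) (A : Matrix (Fin d) (Fin d) ℂ)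
    (P : ι → Matrix (Fin d) (Fin d) ℂ) :
    F A (∑ k ∈ s, P k) = ∑ k ∈ s, F A (P k) := by
  simp only [F, Matrix.sum_mul, Matrix.mul_sum, trace_sum, Finset.mul_sum,
    Finset.sum_smul, Finset.smul_sum, ← Finset.sum_add_distrib, ← Finset.sum_sub_distrib]

lemma sum_rankOne (M : Matrix (Fin d) (Fin d) ℂ) :
    ∑ k, vecMulVec (star (M k)) (M k) = Mᴴ * M := by
  ext i j
  simp only [Finset.sum_apply, Matrix.sum_apply, vecMulVec_apply, Pi.star_apply,
    Matrix.mul_apply, conjTranspose_apply]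

lemma posSemidef_sum {ι : Type*} (s : Finset ι) (f : ι → Matrix (Fin d) (Fin d) ℂ)
    (h : ∀ i ∈ s, (f i).PosSemidef) : (∑ i ∈ s, f i).PosSemidef := by
  classical
  induction s using Finset.induction with
  | empty => simpa using (Matrix.PosSemidef.zero : (0 : Matrix (Fin d) (Fin d) ℂ).PosSemidef)
  | insert _ _ hx ih =>
    rw [Finset.sum_insert hx]
    exact (h _ (Finset.mem_insert_self _ _)).add (ih fun i hi => h i (Finset.mem_insert_of_mem hi))

lemma F_posSemidef (M N : Matrix (Fin d) (Fin d) ℂ) :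
    (F (Mᴴ * M) (Nᴴ * N)).PosSemidef := by
  rw [← sum_rankOne M, ← sum_rankOne N, F_sum_left]
  apply posSemidef_sum
  intro k _
  rw [F_sum_right]
  apply posSemidef_sum
  intro l _
  have := rankOne_F_posSemidef (star (M k)) (star (N l))
  simpa only [star_star] using this

end FilteredCH

open FilteredCH in
theorem filtered_cayley_hamiltonian_map_positive {d : ℕ} (X Y Z : Matrix (Fin d) (Fin d) ℂ)
    (hX : X.PosSemidef) (hY : Y.PosSemidef) (hZ : Z.PosSemidef) :
    (((Y * X).trace * (Z * X).trace) • X + X * Y * X * Z * X + X * Z * X * Y * X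
      - (Z * X).trace • (X * Y * X) - (Y * X * Z * X).trace • X
      - (Y * X).trace • (X * Z * X)).PosSemidef := by
  obtain ⟨R, hRps, hRR⟩ : ∃ R : Matrix (Fin d) (Fin d) ℂ, R.PosSemidef ∧ R * R = X :=
    by open scoped MatrixOrder in exact ⟨CFC.sqrt X, (CFC.sqrt_nonneg X).posSemidef, CFC.sqrt_mul_sqrt_self X hX.nonneg⟩
  obtain ⟨S, hSps, hSS⟩ : ∃ S : Matrix (Fin d) (Fin d) ℂ, S.PosSemidef ∧ S * S = Y :=
    by open scoped MatrixOrder in exact ⟨CFC.sqrt Y, (CFC.sqrt_nonneg Y).posSemidef, CFC.sqrt_mul_sqrt_self Y hY.nonneg⟩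
  obtain ⟨T, hTps, hTT⟩ : ∃ T : Matrix (Fin d) (Fin d) ℂ, T.PosSemidef ∧ T * T = Z :=
    by open scoped MatrixOrder in exact ⟨CFC.sqrt Z, (CFC.sqrt_nonneg Z).posSemidef, CFC.sqrt_mul_sqrt_self Z hZ.nonneg⟩
  have hRH : Rᴴ = R := hRps.isHermitian
  have hSH : Sᴴ = S := hSps.isHermitian
  have hTH : Tᴴ = T := hTps.isHermitian
  have hXr : ∀ M : Matrix (Fin d) (Fin d) ℂ, R * (R * M) = X * M := fun M => by
    rw [← mul_assoc, hRR]
  have hA : R * Y * R = (S * R)ᴴ * (S * R) := by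
    rw [conjTranspose_mul, hRH, hSH, ← hSS]
    simp only [mul_assoc]
  have hB : R * Z * R = (T * R)ᴴ * (T * R) := by
    rw [conjTranspose_mul, hRH, hTH, ← hTT]
    simp only [mul_assoc]
  -- trace identities
  have eA : (R * Y * R).trace = (Y * X).trace := by
    rw [trace_mul_comm, ← mul_assoc, hRR, trace_mul_comm]
  have eB : (R * Z * R).trace = (Z * X).trace := by
    rw [trace_mul_comm, ← mul_assoc, hRR, trace_mul_comm]
  have eAB : (R * Y * R * (R * Z * R)).trace = (Y * X * Z * X).trace := by
    rw [show R * Y * R * (R * Z * R) = R * (Y * (R * (R * (Z * R)))) by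
      simp only [mul_assoc]]
    rw [trace_mul_comm, hXr]
    simp only [mul_assoc, hRR]
  -- the key factorization
  have key : (((Y * X).trace * (Z * X).trace) • X + X * Y * X * Z * X + X * Z * X * Y * X
      - (Z * X).trace • (X * Y * X) - (Y * X * Z * X).trace • X
      - (Y * X).trace • (X * Z * X)) = R * F (R * Y * R) (R * Z * R) * Rᴴ := by
    rw [hRH]
    simp only [F, eA, eB, eAB, Matrix.mul_add, Matrix.add_mul, Matrix.mul_sub,
      Matrix.sub_mul, Matrix.mul_smul, Matrix.smul_mul, Matrix.mul_one]
    simp only [mul_assoc, hRR, hXr]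
    abel
  rw [key]
  have hF : (F (R * Y * R) (R * Z * R)).PosSemidef := by
    rw [hA, hB]; exact F_posSemidef (S * R) (T * R)
  exact hF.mul_mul_conjTranspose_same R
end

section
/- Purity inequality for separable states: if ρ_{AB} is a separable bipartite density matrix (a convex combination of tensor products of density matrices), then tr(ρ_B²) ≥ tr(ρ_{AB}²), where ρ_B is the partial trace of ρ_{AB} over system A. -/
open Matrix ComplexOrder Kronecker

private lemma cs_normSq {n : Type*} [Fintype n] (a b : n → ℂ) :
    Complex.normSq (∑ k, a k * b k) ≤
      (∑ k, Complex.normSq (a k)) * (∑ k, Complex.normSq (b k)) := by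
  have h1 : ‖∑ k, a k * b k‖ ≤ ∑ k, ‖a k‖ * ‖b k‖ := by
    simpa using norm_sum_le Finset.univ (fun k => a k * b k)
  have h2 : (∑ k, ‖a k‖ * ‖b k‖) ^ 2 ≤
      (∑ k, ‖a k‖ ^ 2) * (∑ k, ‖b k‖ ^ 2) :=
    Finset.sum_mul_sq_le_sq_mul_sq _ _ _
  calc Complex.normSq (∑ k, a k * b k) = ‖∑ k, a k * b k‖ ^ 2 := by
        rw [Complex.sq_norm]
    _ ≤ (∑ k, ‖a k‖ * ‖b k‖) ^ 2 := by
        apply pow_le_pow_left₀ (norm_nonneg _) h1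
    _ ≤ (∑ k, ‖a k‖ ^ 2) * (∑ k, ‖b k‖ ^ 2) := h2
    _ = _ := by simp [Complex.sq_norm]

private lemma trace_conjTranspose_mul_self {n m : Type*} [Fintype n] [Fintype m]
    (C : Matrix n m ℂ) :
    (Cᴴ * C).trace = ((∑ i, ∑ j, Complex.normSq (C i j) : ℝ) : ℂ) := by
  simp only [Matrix.trace, Matrix.diag, Matrix.mul_apply, Matrix.conjTranspose_apply]
  push_cast
  rw [Finset.sum_comm]
  congr 1; ext i; congr 1; ext j
  rw [Complex.normSq_eq_conj_mul_self]; rfl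

private lemma trace_mul_psd {n : Type*} [Fintype n] [DecidableEq n]
    {A B : Matrix n n ℂ} (hA : A.PosSemidef) (hB : B.PosSemidef) :
    ∃ r : ℝ, (A * B).trace = (r : ℂ) ∧ 0 ≤ r ∧ r ≤ A.trace.re * B.trace.re := by
  obtain ⟨M, rfl⟩ : ∃ M : Matrix n n ℂ, _ = Mᴴ * M := by
    open scoped MatrixOrder Matrix.Norms.L2Operator in
    exact CStarAlgebra.nonneg_iff_eq_star_mul_self.mp hA.nonneg
  obtain ⟨N, rfl⟩ : ∃ N : Matrix n n ℂ, _ = Nᴴ * N := by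
    open scoped MatrixOrder Matrix.Norms.L2Operator in
    exact CStarAlgebra.nonneg_iff_eq_star_mul_self.mp hB.nonneg
  have hcyc : (Mᴴ * M * (Nᴴ * N)).trace = ((N * Mᴴ)ᴴ * (N * Mᴴ)).trace := by
    rw [Matrix.mul_assoc, Matrix.trace_mul_comm]
    congr 1
    simp [Matrix.conjTranspose_mul, Matrix.mul_assoc]
  refine ⟨∑ i, ∑ j, Complex.normSq ((N * Mᴴ) i j),
    hcyc.trans (trace_conjTranspose_mul_self _),
    Finset.sum_nonneg fun _ _ => Finset.sum_nonneg fun _ _ => Complex.normSq_nonneg _, ?_⟩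
  have hMt : ((Mᴴ * M).trace).re = ∑ i, ∑ j, Complex.normSq (M i j) := by
    rw [trace_conjTranspose_mul_self]; simp
  have hNt : ((Nᴴ * N).trace).re = ∑ i, ∑ j, Complex.normSq (N i j) := by
    rw [trace_conjTranspose_mul_self]; simp
  rw [hMt, hNt]
  calc ∑ i, ∑ j, Complex.normSq ((N * Mᴴ) i j)
      ≤ ∑ i, ∑ j, (∑ k, Complex.normSq (N i k)) * (∑ k, Complex.normSq (M j k)) := by
        refine Finset.sum_le_sum fun i _ => Finset.sum_le_sum fun j _ => ?_
        have := cs_normSq (fun k => N i k) (fun k => (starRingEnd ℂ) (M j k))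
        simpa [Matrix.mul_apply, Matrix.conjTranspose_apply, Complex.normSq_conj] using this
    _ = (∑ i, ∑ k, Complex.normSq (N i k)) * (∑ j, ∑ k, Complex.normSq (M j k)) := by
        rw [← Finset.sum_mul_sum]
    _ = (∑ i, ∑ j, Complex.normSq (M i j)) * (∑ i, ∑ j, Complex.normSq (N i j)) := by
        rw [mul_comm]

/-- A density matrix: positive semidefinite with unit trace. -/
def IsDensityMatrix {n : Type*} [Fintype n] [DecidableEq n]
    (ρ : Matrix n n ℂ) : Prop :=
  ρ.PosSemidef ∧ ρ.trace = 1

theorem purity_inequality_separable {dA dB : ℕ}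
    (ρ : Matrix (Fin dA × Fin dB) (Fin dA × Fin dB) ℂ)
    (hρ : IsDensityMatrix ρ)
    (hsep : ∃ (m : ℕ) (p : Fin m → ℝ)
        (σ : Fin m → Matrix (Fin dA) (Fin dA) ℂ)
        (τ : Fin m → Matrix (Fin dB) (Fin dB) ℂ),
        (∀ i, 0 ≤ p i) ∧ (∑ i, p i = 1) ∧
        (∀ i, IsDensityMatrix (σ i)) ∧ (∀ i, IsDensityMatrix (τ i)) ∧
        ρ = ∑ i, (p i : ℂ) • (σ i ⊗ₖ τ i)) :
    ((ρ * ρ).trace).re ≤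
      ((Matrix.of (fun b b' : Fin dB => ∑ a : Fin dA, ρ (a, b) (a, b')) *
        Matrix.of (fun b b' : Fin dB => ∑ a : Fin dA, ρ (a, b) (a, b'))).trace).re := by
  obtain ⟨m, p, σ, τ, hp, hpsum, hσ, hτ, hρeq⟩ := hsep
  have hL : (ρ * ρ).trace =
      ∑ i, ∑ j, (p i : ℂ) * (p j : ℂ) * ((σ i * σ j).trace * (τ i * τ j).trace) := by
    rw [hρeq, Finset.sum_mul_sum, Matrix.trace_sum]
    refine Finset.sum_congr rfl fun i _ => ?_
    rw [Matrix.trace_sum]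
    refine Finset.sum_congr rfl fun j _ => ?_
    rw [smul_mul_assoc, mul_smul_comm, Matrix.trace_smul, Matrix.trace_smul,
        ← Matrix.mul_kronecker_mul, Matrix.trace_kronecker, smul_eq_mul, smul_eq_mul]
    ring
  have hB : (Matrix.of (fun b b' : Fin dB => ∑ a : Fin dA, ρ (a, b) (a, b')))
      = ∑ i, (p i : ℂ) • τ i := by
    ext b b'
    simp only [Matrix.of_apply, hρeq, Matrix.sum_apply, Matrix.smul_apply,
      Matrix.kroneckerMap_apply, smul_eq_mul]
    rw [Finset.sum_comm]
    refine Finset.sum_congr rfl fun i _ => ?_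
    rw [← Finset.mul_sum, ← Finset.sum_mul]
    have htr : ∑ a, σ i a a = (1 : ℂ) := (hσ i).2
    rw [htr, one_mul]
  have hR : ((Matrix.of (fun b b' : Fin dB => ∑ a : Fin dA, ρ (a, b) (a, b')) *
        Matrix.of (fun b b' : Fin dB => ∑ a : Fin dA, ρ (a, b) (a, b'))).trace) =
      ∑ i, ∑ j, (p i : ℂ) * (p j : ℂ) * (τ i * τ j).trace := by
    rw [hB, Finset.sum_mul_sum, Matrix.trace_sum]
    refine Finset.sum_congr rfl fun i _ => ?_
    rw [Matrix.trace_sum]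
    refine Finset.sum_congr rfl fun j _ => ?_
    rw [smul_mul_assoc, mul_smul_comm, Matrix.trace_smul, Matrix.trace_smul,
      smul_eq_mul, smul_eq_mul]
    ring
  rw [hL, hR, Complex.re_sum, Complex.re_sum]
  refine Finset.sum_le_sum fun i _ => ?_
  rw [Complex.re_sum, Complex.re_sum]
  refine Finset.sum_le_sum fun j _ => ?_
  obtain ⟨s, hs, hs0, hs1⟩ := trace_mul_psd (hσ i).1 (hσ j).1
  obtain ⟨t, ht, ht0, -⟩ := trace_mul_psd (hτ i).1 (hτ j).1
  have hσi : ((σ i).trace).re = 1 := by rw [(hσ i).2]; simp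
  have hσj : ((σ j).trace).re = 1 := by rw [(hσ j).2]; simp
  have hs1' : s ≤ 1 := by rw [hσi, hσj, one_mul] at hs1; exact hs1
  rw [hs, ht]
  have e1 : ((p i : ℂ) * (p j : ℂ) * ((s : ℂ) * (t : ℂ))).re = p i * p j * (s * t) := by
    push_cast; rw [← Complex.ofReal_mul, ← Complex.ofReal_mul, ← Complex.ofReal_mul,
      Complex.ofReal_re]
  have e2 : ((p i : ℂ) * (p j : ℂ) * (t : ℂ)).re = p i * p j * t := by
    rw [← Complex.ofReal_mul, ← Complex.ofReal_mul, Complex.ofReal_re]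
  rw [e1, e2]
  have hst : s * t ≤ t := mul_le_of_le_one_left ht0 hs1'
  exact mul_le_mul_of_nonneg_left hst (mul_nonneg (hp i) (hp j))
end
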